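/- Let D be an Egyptian integral domain and let W be a multiplicative subset of the polynomial ring D[X] with 0 ∉ W such that W is not contained in D (i.e., W contains a polynomial of positive degree). Then the localization D[X]_W is an Egyptian domain. -/

import Mathlib

universe u

/-- A commutative ring `D` is *Egyptian* if every nonzero `d : D` is a sum of reciprocals
`d = 1/d₁ + ⋯ + 1/dₙ` of finitely many pairwise distinct nonzero elements `dᵢ` of `D`, the
equality holding in any field in which `D` embeds.  (For an integral domain `D` this is
equivalent to the usual definition, in which the equality is required in the fraction field
of `D`: such an equality holds in one field containing `D` iff it holds in all of them.) -/
def IsEgyptian (D : Type u) [CommRing D] : Prop :=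
  ∀ d : D, d ≠ 0 → ∃ s : Finset D, (∀ i ∈ s, i ≠ 0) ∧
    ∀ (K : Type u) [Field K] (φ : D →+* K), Function.Injective φ →
      φ d = ∑ i ∈ s, (φ i)⁻¹

/-- A domain `D` is *generically Egyptian* if `D[1/f]` is Egyptian for some nonzero `f : D`. -/
def IsGenericallyEgyptian (D : Type u) [CommRing D] : Prop :=
  ∃ f : D, f ≠ 0 ∧ IsEgyptian (Localization.Away f)

/-- A domain `D` is *locally Egyptian* if there is a finite set of generators of the unit
ideal of `D` such that inverting any one of them yields an Egyptian ring. -/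
def IsLocallyEgyptian (D : Type u) [CommRing D] : Prop :=
  ∃ s : Finset D, Ideal.span (s : Set D) = ⊤ ∧
    ∀ f ∈ s, IsEgyptian (Localization.Away f)

set_option linter.unusedSectionVars false
set_option linter.unusedVariables false
set_option maxHeartbeats 1000000

open Polynomial

theorem frac_split {K : Type*} [Field K] (a y : K) (ha : a ≠ 0) (hy : y ≠ 0) (hay : a + y ≠ 0) :
    a⁻¹ = (a + y)⁻¹ + (a + a * a * y⁻¹)⁻¹ := by
  have key : a + a * a * y⁻¹ = a * (a + y) * y⁻¹ := by field_simp; ring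
  rw [key, mul_inv, mul_inv, inv_inv]
  field_simp




section Aux
variable {D : Type u} [CommRing D] [IsDomain D]
variable (W : Submonoid (Polynomial D))

/-- sums of reciprocals with possibly repeated denominators -/
def Egy [IsDomain (Localization W)] (x : FractionRing (Localization W)) : Prop :=
  ∃ l : Multiset (Localization W), (∀ d ∈ l, d ≠ 0) ∧
    x = (l.map fun d => (algebraMap (Localization W) (FractionRing (Localization W)) d)⁻¹).sum

variable [IsDomain (Localization W)]

theorem egy_zero : Egy W 0 := ⟨0, by simp, by simp⟩

theorem egy_add {x y} (hx : Egy W x) (hy : Egy W y) : Egy W (x + y) := by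
  obtain ⟨l, hl, rfl⟩ := hx
  obtain ⟨l', hl', rfl⟩ := hy
  exact ⟨l + l', fun d hd => ((Multiset.mem_add).1 hd).elim (hl d) (hl' d), by
    rw [Multiset.map_add, Multiset.sum_add]⟩

theorem egy_neg {x} (hx : Egy W x) : Egy W (-x) := by
  obtain ⟨l, hl, rfl⟩ := hx
  refine ⟨l.map (fun d => -d), fun d hd => ?_, ?_⟩
  · obtain ⟨e, he, rfl⟩ := Multiset.mem_map.1 hd
    exact neg_ne_zero.2 (hl e he)
  · clear hl
    induction l using Multiset.induction with
    | empty => simp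
    | cons d l ih => simp only [Multiset.map_cons, Multiset.sum_cons, neg_add, ih, map_neg,
        inv_neg]

theorem egy_inv_mul {x} (d : Localization W) (hd : d ≠ 0) (hx : Egy W x) :
    Egy W ((algebraMap (Localization W) (FractionRing (Localization W)) d)⁻¹ * x) := by
  obtain ⟨l, hl, rfl⟩ := hx
  refine ⟨l.map (fun e => d * e), fun e he => ?_, ?_⟩
  · obtain ⟨e', he', rfl⟩ := Multiset.mem_map.1 he
    exact mul_ne_zero hd (hl e' he')
  · clear hl
    induction l using Multiset.induction with
    | empty => simp
    | cons e l ih => simp only [Multiset.map_cons, Multiset.sum_cons, mul_add, ih, map_mul,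
        mul_inv]

theorem egy_mul {x y} (hx : Egy W x) (hy : Egy W y) : Egy W (x * y) := by
  obtain ⟨l, hl, rfl⟩ := hx
  induction l using Multiset.induction with
  | empty => simpa using egy_zero W
  | cons d l ih =>
    rw [Multiset.map_cons, Multiset.sum_cons, add_mul]
    refine egy_add W (egy_inv_mul W d (hl d (Multiset.mem_cons_self d l)) hy) ?_
    exact ih (fun e he => hl e (Multiset.mem_cons_of_mem he))

theorem egy_sum {α : Type*} (s : Finset α) (f : α → FractionRing (Localization W))
    (h : ∀ i ∈ s, Egy W (f i)) : Egy W (∑ i ∈ s, f i) := by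
  classical
  induction s using Finset.induction with
  | empty => simpa using egy_zero W
  | insert _ _ hi ih =>
    rw [Finset.sum_insert hi]
    exact egy_add W (h _ (Finset.mem_insert_self _ _))
      (ih fun i hi' => h i (Finset.mem_insert_of_mem hi'))

theorem egy_unit (u : (Localization W)ˣ) :
    Egy W (algebraMap (Localization W) (FractionRing (Localization W)) u) := by
  refine ⟨{((u⁻¹ : (Localization W)ˣ) : Localization W)}, by simp [Units.ne_zero], ?_⟩
  rw [Multiset.map_singleton, Multiset.sum_singleton]
  exact (inv_eq_of_mul_eq_one_right (by rw [← map_mul]; simp)).symm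

end Aux

section B
variable {D : Type u} [CommRing D] [IsDomain D]
variable {W : Submonoid (Polynomial D)}

theorem hWle (h0 : (0 : Polynomial D) ∉ W) : W ≤ nonZeroDivisors (Polynomial D) :=
  fun x hx => mem_nonZeroDivisors_of_ne_zero (by rintro rfl; exact h0 hx)

variable [IsDomain (Localization W)]

/-- the composite map D[X] → (D[X])_W → Frac -/
noncomputable def psi (W : Submonoid (Polynomial D)) [IsDomain (Localization W)] :
    Polynomial D →+* FractionRing (Localization W) :=
  (algebraMap (Localization W) (FractionRing (Localization W))).comp
    (algebraMap (Polynomial D) (Localization W))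

theorem psi_inj (h0 : (0 : Polynomial D) ∉ W) : Function.Injective (psi W) :=
  (IsFractionRing.injective (Localization W) (FractionRing (Localization W))).comp
    (IsLocalization.injective _ (hWle h0))

theorem psi_ne_zero (h0 : (0 : Polynomial D) ∉ W) {p : Polynomial D} (hp : p ≠ 0) :
    psi W p ≠ 0 := fun h => hp (psi_inj h0 (by simpa using h))

theorem jmap_ne_zero (h0 : (0 : Polynomial D) ∉ W) {p : Polynomial D} (hp : p ≠ 0) :
    algebraMap (Polynomial D) (Localization W) p ≠ 0 := by
  intro h
  exact hp (IsLocalization.injective _ (hWle h0) (by rw [h, map_zero]))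

/-- cancellation of a common factor in a psi-fraction -/
theorem psi_cancel (h0 : (0 : Polynomial D) ∉ W) (p q r : Polynomial D)
    (hq : q ≠ 0) (hr : r ≠ 0) :
    psi W (p * r) * (psi W (q * r))⁻¹ = psi W p * (psi W q)⁻¹ := by
  rw [map_mul, map_mul, mul_inv]
  have hq' := psi_ne_zero h0 hq
  have hr' := psi_ne_zero h0 hr
  field_simp

end B


section DD
variable {D : Type u} [CommRing D] [IsDomain D]
variable {W : Submonoid (Polynomial D)} [IsDomain (Localization W)]
variable {D : Type u} [CommRing D] [IsDomain D]
variable {W : Submonoid (Polynomial D)} [IsDomain (Localization W)]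

theorem egy_frac (h0 : (0 : Polynomial D) ∉ W) {p : Polynomial D} (hp : p ≠ 0) :
    Egy W (psi W p)⁻¹ := by
  refine ⟨{algebraMap (Polynomial D) (Localization W) p}, ?_, by simp [psi]⟩
  simp only [Multiset.mem_singleton]
  rintro d rfl
  exact jmap_ne_zero h0 hp

theorem egy_base (h0 : (0 : Polynomial D) ∉ W) (hD : IsEgyptian D) {a : D} (ha : a ≠ 0) :
    Egy W (psi W (C a)) := by
  obtain ⟨s, hs, key⟩ := hD a ha
  have hinj : Function.Injective ((psi W).comp (C : D →+* Polynomial D)) :=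
    (psi_inj h0).comp Polynomial.C_injective
  have hkey := key (FractionRing (Localization W)) ((psi W).comp (C : D →+* Polynomial D)) hinj
  refine ⟨s.val.map (fun i => algebraMap (Polynomial D) (Localization W) (C i)), ?_, ?_⟩
  · intro d hd
    obtain ⟨i, hi, rfl⟩ := Multiset.mem_map.1 hd
    exact jmap_ne_zero h0 (fun h => hs i hi (by simpa using h))
  · rw [Multiset.map_map]
    exact hkey

theorem egy_w_pow (h0 : (0 : Polynomial D) ∉ W) {w : Polynomial D} (hw : w ∈ W) (t : ℕ) :
    Egy W (psi W (w ^ t)) := by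
  have hu : IsUnit (algebraMap (Polynomial D) (Localization W) w) :=
    IsLocalization.map_units _ (⟨w, hw⟩ : W)
  have := egy_unit W (hu.unit ^ t)
  have heq : ((hu.unit ^ t : (Localization W)ˣ) : Localization W)
      = algebraMap (Polynomial D) (Localization W) (w ^ t) := by
    rw [Units.val_pow_eq_pow_val, IsUnit.unit_spec, map_pow]
  rwa [heq] at this


theorem CX_ne_zero {c : D} (hc : c ≠ 0) (s : ℕ) : C c * X ^ s ≠ (0 : Polynomial D) :=
  mul_ne_zero (by rwa [Ne, Polynomial.C_eq_zero]) (pow_ne_zero _ Polynomial.X_ne_zero)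

theorem egy_monomial (h0 : (0 : Polynomial D) ∉ W) (hD : IsEgyptian D)
    {w : Polynomial D} (hw : w ∈ W) (hm : 0 < w.natDegree) :
    ∀ k s : ℕ, ∀ a c : D, a ≠ 0 → c ≠ 0 →
      Egy W (psi W (C a * X ^ k) * (psi W (C c * X ^ s))⁻¹) := by
  intro k
  induction k using Nat.strong_induction_on with
  | _ k IH =>
  intro s a c ha hc
  rcases Nat.eq_zero_or_pos k with rfl | hk
  · rw [pow_zero, mul_one]
    exact egy_mul W (egy_base h0 hD ha) (egy_frac h0 (CX_ne_zero hc s))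
  -- main case
  have hwne : w ≠ 0 := fun h => h0 (h ▸ hw)
  set c' := w.leadingCoeff with hc'def
  have hc' : c' ≠ 0 := Polynomial.leadingCoeff_ne_zero.2 hwne
  have hck : c' ^ k ≠ 0 := pow_ne_zero _ hc'
  set M := k * w.natDegree with hMdef
  have hMk : k ≤ M := Nat.le_mul_of_pos_right k hm
  set u := M - k + s with hudef
  have hdeg : (w ^ k).natDegree = M := Polynomial.natDegree_pow' (by rwa [← hc'def])
  have hlead : (w ^ k).coeff M = c' ^ k := by
    rw [← hdeg, Polynomial.coeff_natDegree, Polynomial.leadingCoeff_pow' (by rwa [← hc'def])]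
  -- polynomial decomposition
  have hpoly : C a * w ^ k
      = C (a * c' ^ k) * X ^ M
        + ∑ i ∈ Finset.range M, C (a * (w ^ k).coeff i) * X ^ i := by
    conv_lhs => rw [Polynomial.as_sum_range_C_mul_X_pow (w ^ k)]
    rw [hdeg, Finset.mul_sum, Finset.sum_range_succ, hlead, add_comm]
    congr 1
    · rw [← mul_assoc, ← Polynomial.C_mul]
    · exact Finset.sum_congr rfl fun i _ => by rw [← mul_assoc, ← Polynomial.C_mul]
  -- field identity
  have e1 : (C a * X ^ k) * (C (c' ^ k) * X ^ (M - k)) = C (a * c' ^ k) * X ^ M := by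
    rw [mul_mul_mul_comm, ← Polynomial.C_mul, ← pow_add,
      show k + (M - k) = M by omega]
  have e2 : (C c * X ^ s) * (C (c' ^ k) * X ^ (M - k)) = C (c * c' ^ k) * X ^ u := by
    rw [mul_mul_mul_comm, ← Polynomial.C_mul, ← pow_add,
      show s + (M - k) = u by omega]
  have hcancel := psi_cancel h0 (C a * X ^ k) (C c * X ^ s) (C (c' ^ k) * X ^ (M - k))
    (CX_ne_zero hc s) (CX_ne_zero hck (M - k))
  rw [e1, e2] at hcancel
  have hpsi : psi W (C a * w ^ k)
      = psi W (C (a * c' ^ k) * X ^ M)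
        + ∑ i ∈ Finset.range M, psi W (C (a * (w ^ k).coeff i) * X ^ i) := by
    rw [hpoly, map_add, map_sum]
  have heq : psi W (C a * X ^ k) * (psi W (C c * X ^ s))⁻¹
      = psi W (C a * w ^ k) * (psi W (C (c * c' ^ k) * X ^ u))⁻¹
        - ∑ i ∈ Finset.range M,
            psi W (C (a * (w ^ k).coeff i) * X ^ i) * (psi W (C (c * c' ^ k) * X ^ u))⁻¹ := by
    rw [← hcancel, hpsi, add_mul, ← Finset.sum_mul, add_sub_cancel_right]
  rw [heq, sub_eq_add_neg]
  refine egy_add W ?_ (egy_neg W (egy_sum W _ _ fun i hi => ?_))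
  · rw [map_mul]
    exact egy_mul W (egy_mul W (egy_base h0 hD ha) (egy_w_pow h0 hw k))
      (egy_frac h0 (CX_ne_zero (mul_ne_zero hc hck) u))
  · -- term i, i < M
    have hiM : i < M := Finset.mem_range.1 hi
    set b := a * (w ^ k).coeff i with hbdef
    rcases eq_or_ne b 0 with hb | hb
    · rw [hb]
      simpa using egy_zero W
    rcases le_or_gt i u with hiu | hiu
    · -- cancel X^i
      have e3 : (C b * X ^ 0) * (C 1 * X ^ i) = C b * X ^ i := by
        rw [mul_mul_mul_comm, ← Polynomial.C_mul, ← pow_add, mul_one, zero_add]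
      have e4 : (C (c * c' ^ k) * X ^ (u - i)) * (C 1 * X ^ i) = C (c * c' ^ k) * X ^ u := by
        rw [mul_mul_mul_comm, ← Polynomial.C_mul, ← pow_add, mul_one,
          show u - i + i = u by omega]
      have hcan := psi_cancel h0 (C b * X ^ 0) (C (c * c' ^ k) * X ^ (u - i)) (C 1 * X ^ i)
        (CX_ne_zero (mul_ne_zero hc hck) (u - i)) (CX_ne_zero one_ne_zero i)
      rw [e3, e4] at hcan
      rw [hcan]
      exact IH 0 hk (u - i) b (c * c' ^ k) hb (mul_ne_zero hc hck)
    · -- cancel X^u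
      have e3 : (C b * X ^ (i - u)) * (C 1 * X ^ u) = C b * X ^ i := by
        rw [mul_mul_mul_comm, ← Polynomial.C_mul, ← pow_add, mul_one,
          show i - u + u = i by omega]
      have e4 : (C (c * c' ^ k) * X ^ 0) * (C 1 * X ^ u) = C (c * c' ^ k) * X ^ u := by
        rw [mul_mul_mul_comm, ← Polynomial.C_mul, ← pow_add, mul_one, zero_add]
      have hcan := psi_cancel h0 (C b * X ^ (i - u)) (C (c * c' ^ k) * X ^ 0) (C 1 * X ^ u)
        (CX_ne_zero (mul_ne_zero hc hck) 0) (CX_ne_zero one_ne_zero u)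
      rw [e3, e4] at hcan
      rw [hcan]
      have hlt : i - u < k := by omega
      exact IH (i - u) hlt 0 b (c * c' ^ k) hb (mul_ne_zero hc hck)

theorem egy_poly (h0 : (0 : Polynomial D) ∉ W) (hD : IsEgyptian D)
    {w : Polynomial D} (hw : w ∈ W) (hm : 0 < w.natDegree) (f : Polynomial D) :
    Egy W (psi W f) := by
  conv => rw [Polynomial.as_sum_range_C_mul_X_pow f]
  rw [map_sum]
  refine egy_sum W _ _ fun i _ => ?_
  rcases eq_or_ne (f.coeff i) 0 with h | h
  · rw [h]
    simpa using egy_zero W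
  · have := egy_monomial h0 hD hw hm i 0 (f.coeff i) 1 h one_ne_zero
    simpa using this

theorem egy_loc (h0 : (0 : Polynomial D) ∉ W) (hD : IsEgyptian D)
    {w : Polynomial D} (hw : w ∈ W) (hm : 0 < w.natDegree) (r : Localization W) :
    Egy W (algebraMap (Localization W) (FractionRing (Localization W)) r) := by
  obtain ⟨⟨f, v⟩, hfv⟩ := IsLocalization.surj W r
  have hv : (v : Polynomial D) ≠ 0 := fun h => h0 (h ▸ v.2)
  have hvF : psi W (v : Polynomial D) ≠ 0 := psi_ne_zero h0 hv
  have key : algebraMap (Localization W) (FractionRing (Localization W)) r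
      = psi W f * (psi W (v : Polynomial D))⁻¹ := by
    rw [eq_mul_inv_iff_mul_eq₀ hvF]
    have := congrArg (algebraMap (Localization W) (FractionRing (Localization W))) hfv
    rw [map_mul] at this
    exact this
  rw [key]
  exact egy_mul W (egy_poly h0 hD hw hm f) (egy_frac h0 hv)

theorem pow_w_inj (h0 : (0 : Polynomial D) ∉ W) {w : Polynomial D} (hm : 0 < w.natDegree) :
    Function.Injective
      (fun N : ℕ => (algebraMap (Polynomial D) (Localization W) w) ^ N) := by
  intro a b hab
  have hwne : w ≠ 0 := by rintro rfl; simp at hm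
  have hc : w.leadingCoeff ≠ 0 := Polynomial.leadingCoeff_ne_zero.2 hwne
  simp only [← map_pow] at hab
  have := IsLocalization.injective (Localization W) (hWle h0) hab
  have hdeg := congrArg Polynomial.natDegree this
  rw [Polynomial.natDegree_pow' (pow_ne_zero a hc),
    Polynomial.natDegree_pow' (pow_ne_zero b hc)] at hdeg
  exact Nat.eq_of_mul_eq_mul_right hm hdeg

/-- replacement step: split a unit fraction into two, avoiding a finite set -/
theorem egy_split (h0 : (0 : Polynomial D) ∉ W) {w : Polynomial D} (hw : w ∈ W)
    (hm : 0 < w.natDegree) {d : Localization W} (hd : d ≠ 0) (s : Finset (Localization W)) :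
    ∃ d₁ d₂ : Localization W, d₁ ≠ 0 ∧ d₂ ≠ 0 ∧ d₁ ≠ d₂ ∧ d₁ ∉ s ∧ d₂ ∉ s ∧
      (algebraMap (Localization W) (FractionRing (Localization W)) d)⁻¹
        = (algebraMap (Localization W) (FractionRing (Localization W)) d₁)⁻¹
          + (algebraMap (Localization W) (FractionRing (Localization W)) d₂)⁻¹ := by
  classical
  have hu : IsUnit (algebraMap (Polynomial D) (Localization W) w) :=
    IsLocalization.map_units _ (⟨w, hw⟩ : W)
  obtain ⟨vu, hvu⟩ := hu
  have hvupow : ∀ N : ℕ, ((vu ^ N : (Localization W)ˣ) : Localization W)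
      = (algebraMap (Polynomial D) (Localization W) w) ^ N := by
    intro N; rw [Units.val_pow_eq_pow_val, hvu]
  have hpinj : Function.Injective
      (fun N : ℕ => ((vu ^ N : (Localization W)ˣ) : Localization W)) := by
    intro a b hab
    simp only [hvupow] at hab
    exact pow_w_inj h0 hm hab
  have hqinj : Function.Injective
      (fun N : ℕ => ((vu⁻¹ ^ N : (Localization W)ˣ) : Localization W)) := by
    intro a b hab
    have h1 : (vu⁻¹ ^ a : (Localization W)ˣ) = vu⁻¹ ^ b := Units.ext hab
    have h2 : (vu ^ a : (Localization W)ˣ) = vu ^ b := by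
      have := congrArg (fun x : (Localization W)ˣ => x⁻¹) h1
      simpa using this
    exact hpinj (congrArg (Units.val) h2)
  have hg₁inj : Function.Injective
      (fun N : ℕ => d + ((vu ^ N : (Localization W)ˣ) : Localization W)) := by
    intro a b hab
    exact hpinj (by simpa [add_right_inj] using hab)
  have hg₂inj : Function.Injective
      (fun N : ℕ => d + d * d * ((vu⁻¹ ^ N : (Localization W)ˣ) : Localization W)) := by
    intro a b hab
    simp only [add_right_inj] at hab
    exact hqinj (mul_left_cancel₀ (mul_ne_zero hd hd) hab)
  have hg₃inj : Function.Injective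
      (fun N : ℕ => ((vu ^ (2 * N) : (Localization W)ˣ) : Localization W)) := by
    intro a b hab
    have := hpinj (hab : ((vu ^ (2 * a) : (Localization W)ˣ) : Localization W) = _)
    omega
  have hAfin : (insert (0 : Localization W) ↑s : Set (Localization W)).Finite :=
    Set.Finite.insert _ s.finite_toSet
  have hbad : ((fun N : ℕ => d + ((vu ^ N : (Localization W)ˣ) : Localization W)) ⁻¹'
        (insert 0 ↑s)
      ∪ (fun N : ℕ => d + d * d * ((vu⁻¹ ^ N : (Localization W)ˣ) : Localization W)) ⁻¹'
        (insert 0 ↑s)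
      ∪ (fun N : ℕ => ((vu ^ (2 * N) : (Localization W)ˣ) : Localization W)) ⁻¹'
        {d * d}).Finite := by
    refine Set.Finite.union (Set.Finite.union ?_ ?_) ?_
    · exact Set.Finite.preimage hg₁inj.injOn hAfin
    · exact Set.Finite.preimage hg₂inj.injOn hAfin
    · exact Set.Finite.preimage hg₃inj.injOn (Set.finite_singleton _)
  obtain ⟨N, hN⟩ := hbad.infinite_compl.nonempty
  simp only [Set.mem_compl_iff, Set.mem_union, Set.mem_preimage, not_or,
    Set.mem_insert_iff, Set.mem_singleton_iff, Finset.mem_coe] at hN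
  obtain ⟨⟨h1, h2⟩, h3⟩ := hN
  push_neg at h1 h2
  -- abbreviations
  have hinv1 : ((vu⁻¹ ^ N : (Localization W)ˣ) : Localization W)
      * ((vu ^ N : (Localization W)ˣ) : Localization W) = 1 := by
    rw [← Units.val_mul, inv_pow, inv_mul_cancel, Units.val_one]
  refine ⟨d + ((vu ^ N : (Localization W)ˣ) : Localization W),
    d + d * d * ((vu⁻¹ ^ N : (Localization W)ˣ) : Localization W),
    h1.1, h2.1, ?_, h1.2, h2.2, ?_⟩
  · intro hcontra
    apply h3
    rw [add_right_inj] at hcontra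
    calc ((vu ^ (2 * N) : (Localization W)ˣ) : Localization W)
        = ((vu ^ N : (Localization W)ˣ) : Localization W)
          * ((vu ^ N : (Localization W)ˣ) : Localization W) := by
          rw [show 2 * N = N + N by omega, pow_add, Units.val_mul]
      _ = (d * d * ((vu⁻¹ ^ N : (Localization W)ˣ) : Localization W))
          * ((vu ^ N : (Localization W)ˣ) : Localization W) := by rw [← hcontra]
      _ = d * d * (((vu⁻¹ ^ N : (Localization W)ˣ) : Localization W)
          * ((vu ^ N : (Localization W)ˣ) : Localization W)) := by ring
      _ = d * d := by rw [hinv1, mul_one]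
  · -- the fraction identity
    have hιinj := IsFractionRing.injective (Localization W) (FractionRing (Localization W))
    set ι := algebraMap (Localization W) (FractionRing (Localization W)) with hι
    have hne : ∀ {e : Localization W}, e ≠ 0 → ι e ≠ 0 := by
      intro e he
      simpa [Ne, map_eq_zero_iff ι hιinj] using he
    have hd1 : ι d + ι ((vu ^ N : (Localization W)ˣ) : Localization W) ≠ 0 := by
      rw [← map_add]; exact hne h1.1
    have hdF := hne hd
    have hyF := hne (Units.ne_zero (vu ^ N))
    rw [map_add, map_add, map_mul, map_mul]
    have hinvF : ι ((vu⁻¹ ^ N : (Localization W)ˣ) : Localization W)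
        = (ι ((vu ^ N : (Localization W)ˣ) : Localization W))⁻¹ := by
      refine eq_inv_of_mul_eq_one_left ?_
      rw [← map_mul, hinv1, map_one]
    rw [hinvF]
    exact frac_split _ _ hdF hyF (by rw [← map_add]; exact hne h1.1)

theorem sum_inv_eq_iff {K : Type*} [Field K] {α : Type*} [DecidableEq α] (s : Finset α)
    (g : α → K) (hg : ∀ i ∈ s, g i ≠ 0) (x : K) :
    x = ∑ i ∈ s, (g i)⁻¹ ↔ x * ∏ i ∈ s, g i = ∑ i ∈ s, ∏ j ∈ s.erase i, g j := by
  have hprod : ∏ i ∈ s, g i ≠ 0 := Finset.prod_ne_zero_iff.2 hg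
  have comp : (∑ i ∈ s, (g i)⁻¹) * ∏ i ∈ s, g i = ∑ i ∈ s, ∏ j ∈ s.erase i, g j := by
    rw [Finset.sum_mul]
    exact Finset.sum_congr rfl fun i hi => by
      rw [← Finset.mul_prod_erase s g hi, inv_mul_cancel_left₀ (hg i hi)]
  constructor
  · rintro rfl; exact comp
  · intro h; exact mul_right_cancel₀ hprod (h.trans comp.symm)

theorem egy_repair (h0 : (0 : Polynomial D) ∉ W) {w : Polynomial D} (hw : w ∈ W)
    (hm : 0 < w.natDegree) (l : Multiset (Localization W)) (hl : ∀ d ∈ l, d ≠ 0) :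
    ∃ s : Finset (Localization W), (∀ d ∈ s, d ≠ 0) ∧
      (l.map fun d =>
          (algebraMap (Localization W) (FractionRing (Localization W)) d)⁻¹).sum
        = ∑ d ∈ s, (algebraMap (Localization W) (FractionRing (Localization W)) d)⁻¹ := by
  classical
  obtain ⟨n, hn⟩ : ∃ n, Multiset.card l - l.toFinset.card ≤ n := ⟨_, le_refl _⟩
  induction n generalizing l with
  | zero =>
    have hnd : l.Nodup := by
      refine Multiset.toFinset_card_eq_card_iff_nodup.1 ?_
      have := Multiset.toFinset_card_le (m := l)
      omega
    refine ⟨l.toFinset, fun d hd => hl d (Multiset.mem_toFinset.1 hd), ?_⟩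
    have hval : l.toFinset.val = l := by
      rw [Multiset.toFinset_val, Multiset.dedup_eq_self.2 hnd]
    show _ = (Multiset.map _ l.toFinset.val).sum
    rw [hval]
  | succ n IH =>
    by_cases hnd : l.Nodup
    · refine ⟨l.toFinset, fun d hd => hl d (Multiset.mem_toFinset.1 hd), ?_⟩
      have hval : l.toFinset.val = l := by
        rw [Multiset.toFinset_val, Multiset.dedup_eq_self.2 hnd]
      show _ = (Multiset.map _ l.toFinset.val).sum
      rw [hval]
    · -- find a duplicated element
      rw [Multiset.nodup_iff_count_le_one] at hnd
      push_neg at hnd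
      obtain ⟨d, hd2⟩ := hnd
      have hdl : d ∈ l := Multiset.count_pos.1 (by omega)
      have hdl' : d ∈ l.erase d := by
        rw [← Multiset.count_pos, Multiset.count_erase_self]
        omega
      have hcons : d ::ₘ l.erase d = l := Multiset.cons_erase hdl
      obtain ⟨d₁, d₂, hne1, hne2, h12, hn1, hn2, hiden⟩ :=
        egy_split h0 hw hm (hl d hdl) (l.erase d).toFinset
      have hL : ∀ e ∈ d₁ ::ₘ d₂ ::ₘ l.erase d, e ≠ 0 := by
        intro e he
        rcases Multiset.mem_cons.1 he with rfl | he
        · exact hne1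
        rcases Multiset.mem_cons.1 he with rfl | he
        · exact hne2
        · exact hl e (Multiset.mem_of_mem_erase he)
      have hcard2 : Multiset.card (d₁ ::ₘ d₂ ::ₘ l.erase d)
          - (d₁ ::ₘ d₂ ::ₘ l.erase d).toFinset.card ≤ n := by
        have e1 : Multiset.card l = Multiset.card (l.erase d) + 1 := by
          conv_lhs => rw [← hcons]
          rw [Multiset.card_cons]
        have e2 : l.toFinset.card = (l.erase d).toFinset.card := by
          conv_lhs => rw [← hcons]
          rw [Multiset.toFinset_cons,
            Finset.insert_eq_self.2 (Multiset.mem_toFinset.2 hdl')]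
        have e3 : (d₁ ::ₘ d₂ ::ₘ l.erase d).toFinset.card
            = (l.erase d).toFinset.card + 2 := by
          have e3' : (d₁ ::ₘ d₂ ::ₘ l.erase d).toFinset
              = insert d₁ (insert d₂ (l.erase d).toFinset) := by
            rw [Multiset.toFinset_cons, Multiset.toFinset_cons]
          have hd1nm : d₁ ∉ insert d₂ (l.erase d).toFinset := by
            intro h
            rcases Finset.mem_insert.1 h with h | h
            · exact h12 h
            · exact hn1 h
          have hd2nm : d₂ ∉ (l.erase d).toFinset := fun h => hn2 h
          rw [e3', Finset.card_insert_of_notMem hd1nm, Finset.card_insert_of_notMem hd2nm]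
        have e4 := Multiset.toFinset_card_le (m := l.erase d)
        rw [Multiset.card_cons, Multiset.card_cons, e3]
        rw [e1, e2] at hn
        omega
      obtain ⟨s, hs, hsum⟩ := IH (d₁ ::ₘ d₂ ::ₘ l.erase d) hL hcard2
      refine ⟨s, hs, ?_⟩
      rw [← hsum]
      conv_lhs => rw [← hcons]
      rw [Multiset.map_cons, Multiset.sum_cons, Multiset.map_cons, Multiset.sum_cons,
        Multiset.map_cons, Multiset.sum_cons, hiden, add_assoc]

end DD


/-- If `D` is an Egyptian domain and `W` is a multiplicative subset of `D[X]` not containing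
`0` and not contained in `D` (i.e. containing a polynomial of positive degree), then the
localization `D[X]_W` is Egyptian. -/
theorem statement0 (D : Type u) [CommRing D] [IsDomain D] (hD : IsEgyptian D)
    (W : Submonoid (Polynomial D)) (h0 : (0 : Polynomial D) ∉ W)
    (hW : ∃ w ∈ W, 0 < w.natDegree) :
    IsEgyptian (Localization W) := by
  classical
  haveI : IsDomain (Localization W) := IsLocalization.isDomain_localization (hWle h0)
  obtain ⟨w, hw, hm⟩ := hW
  intro r hr
  obtain ⟨l, hl, hsum⟩ := egy_loc h0 hD hw hm r
  obtain ⟨s, hs, hsum2⟩ := egy_repair h0 hw hm l hl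
  rw [hsum2] at hsum
  refine ⟨s, hs, ?_⟩
  have hιinj := IsFractionRing.injective (Localization W) (FractionRing (Localization W))
  have hring : r * ∏ i ∈ s, i = ∑ i ∈ s, ∏ j ∈ s.erase i, j := by
    apply hιinj
    rw [map_mul, map_prod, map_sum]
    simp_rw [map_prod]
    exact (sum_inv_eq_iff s
      (⇑(algebraMap (Localization W) (FractionRing (Localization W))))
      (fun i hi h => hs i hi (hιinj (by rw [h, map_zero]))) _).1 hsum
  intro K _ φ hφ
  have hφ0 : ∀ i ∈ s, φ i ≠ 0 := fun i hi h => hs i hi (hφ (by rw [h, map_zero]))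
  refine (sum_inv_eq_iff s (⇑φ) hφ0 (φ r)).2 ?_
  have hcongr := congrArg φ hring
  rw [map_mul, map_prod, map_sum] at hcongr
  simp_rw [map_prod] at hcongr
  exact hcongr
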